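/- Let X be a Banach space and f : X → ℝ ∪ {+∞} a lower semicontinuous function satisfying condition (3.3). Suppose there exist w ∈ X, η > 0 and r > 0 such that f(0) < η, f(u) > η for every u ∈ X with ‖u‖ = r, f(w) < η and ‖w‖ > r. Let Γ = {γ : [0,1] → X continuous with γ(0) = 0, γ(1) = w} and c = inf_{γ∈Γ} sup_{t∈[0,1]} f(γ(t)); assume c < +∞ and that f satisfies the Palais–Smale condition at level c. Then there exists a nontrivial (lower) critical point u of f with f(u) = c. -/

import Mathlib

open Metric Set Filter
open scoped ENNReal

/-- The epigraph of `f : X → ℝ ∪ {+∞}`, as a subset of `X × ℝ`. -/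
def epiSet {X : Type*} [MetricSpace X] (f : X → EReal) : Set (X × ℝ) :=
  {p | f p.1 ≤ (p.2 : EReal)}

/-- The metric on `X × ℝ`, `d((u,η),(v,μ)) = (d(u,v)² + (η−μ)²)^{1/2}`. -/
noncomputable def distE {X : Type*} [MetricSpace X] (p q : X × ℝ) : ℝ :=
  Real.sqrt (dist p.1 q.1 ^ 2 + (p.2 - q.2) ^ 2)

/-- The open ball in `X × ℝ` with respect to `distE`. -/
def ballE {X : Type*} [MetricSpace X] (p : X × ℝ) (δ : ℝ) : Set (X × ℝ) :=
  {q | distE q p < δ}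

/-- The set of admissible `σ` in the definition of the weak slope `|d G_f|(u, η)`. -/
def slopeSet {X : Type*} [MetricSpace X] (f : X → EReal) (u : X) (η : ℝ) : Set ℝ :=
  {σ | 0 ≤ σ ∧ ∃ δ : ℝ, 0 < δ ∧ ∃ H : X × ℝ → ℝ → X × ℝ,
    ContinuousOn (fun q : (X × ℝ) × ℝ => H q.1 q.2)
      ((ballE (u, η) δ ∩ epiSet f) ×ˢ Icc 0 δ) ∧
    ∀ p ∈ ballE (u, η) δ ∩ epiSet f, ∀ t ∈ Icc (0:ℝ) δ,
      H p t ∈ epiSet f ∧ distE (H p t) p ≤ t ∧ (H p t).2 ≤ p.2 - σ * t}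

/-- The weak slope `|d G_f|(u, η)` of `G_f` at `(u, η) ∈ epi f`. -/
noncomputable def slopeG {X : Type*} [MetricSpace X] (f : X → EReal) (u : X) (η : ℝ) : ℝ :=
  sSup (slopeSet f u η)

/-- The weak slope `|df|(u)` of a lower semicontinuous `f` at `u ∈ dom f`. -/
noncomputable def wslope {X : Type*} [MetricSpace X] (f : X → EReal) (u : X) : ℝ≥0∞ :=
  if slopeG f u (f u).toReal < 1 then
    ENNReal.ofReal (slopeG f u (f u).toReal / Real.sqrt (1 - slopeG f u (f u).toReal ^ 2))
  else ⊤

/-- Admissible `σ` in the definition of the equivariant weak slope `|d_{ℤ₂} G_f|(0, η)`. -/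
def slopeZ2Set {X : Type*} [NormedAddCommGroup X] [NormedSpace ℝ X]
    (f : X → EReal) (η : ℝ) : Set ℝ :=
  {σ | 0 ≤ σ ∧ ∃ δ : ℝ, 0 < δ ∧ ∃ H : X × ℝ → ℝ → X × ℝ,
    ContinuousOn (fun q : (X × ℝ) × ℝ => H q.1 q.2)
      ((ballE ((0 : X), η) δ ∩ epiSet f) ×ˢ Icc 0 δ) ∧
    ∀ p ∈ ballE ((0 : X), η) δ ∩ epiSet f, ∀ t ∈ Icc (0:ℝ) δ,
      H p t ∈ epiSet f ∧ distE (H p t) p ≤ t ∧ (H p t).2 ≤ p.2 - σ * t ∧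
      (H (-p.1, p.2) t).1 = -(H p t).1}

/-- The equivariant weak slope `|d_{ℤ₂} G_f|(0, η)`. -/
noncomputable def slopeZ2 {X : Type*} [NormedAddCommGroup X] [NormedSpace ℝ X]
    (f : X → EReal) (η : ℝ) : ℝ :=
  sSup (slopeZ2Set f η)

/-- Condition (3.3). -/
def cond33 {X : Type*} [MetricSpace X] (f : X → EReal) : Prop :=
  ∀ (u : X) (η : ℝ), (u, η) ∈ epiSet f → f u < (η : EReal) → slopeG f u η = 1

/-- The Palais–Smale condition at level `c`. -/
def PScond {X : Type*} [MetricSpace X] (f : X → EReal) (c : ℝ) : Prop :=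
  ∀ u : ℕ → X, (∀ n, f (u n) ≠ ⊤) →
    Tendsto (fun n => wslope f (u n)) atTop (nhds 0) →
    Tendsto (fun n => f (u n)) atTop (nhds (c : EReal)) →
    ∃ (v : X) (φ : ℕ → ℕ), StrictMono φ ∧ Tendsto (fun n => u (φ n)) atTop (nhds v)

section AuxLemmas

variable {X : Type*} [MetricSpace X]

lemma distE_nonneg (p q : X × ℝ) : 0 ≤ distE p q := Real.sqrt_nonneg _

lemma distE_self (p : X × ℝ) : distE p p = 0 := by
  simp [distE]

lemma distE_comm (p q : X × ℝ) : distE p q = distE q p := by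
  simp [distE, dist_comm]
  ring_nf

lemma dist_fst_le_distE (p q : X × ℝ) : dist p.1 q.1 ≤ distE p q := by
  have h := Real.sqrt_le_sqrt (show dist p.1 q.1 ^ 2 ≤ dist p.1 q.1 ^ 2 + (p.2 - q.2)^2 by
    nlinarith [sq_nonneg (p.2 - q.2)])
  rwa [Real.sqrt_sq dist_nonneg] at h

lemma abs_snd_le_distE (p q : X × ℝ) : |p.2 - q.2| ≤ distE p q := by
  have h := Real.sqrt_le_sqrt (show (p.2 - q.2) ^ 2 ≤ dist p.1 q.1 ^ 2 + (p.2 - q.2)^2 by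
    nlinarith [sq_nonneg (dist p.1 q.1)])
  rwa [Real.sqrt_sq_eq_abs] at h

lemma distE_le_add_abs (p q : X × ℝ) : distE p q ≤ dist p.1 q.1 + |p.2 - q.2| := by
  have h := Real.sqrt_le_sqrt (show dist p.1 q.1 ^ 2 + (p.2 - q.2)^2 ≤
      (dist p.1 q.1 + |p.2 - q.2|) ^ 2 by
    have h2 : |p.2 - q.2| ^ 2 = (p.2 - q.2)^2 := sq_abs _
    nlinarith [abs_nonneg (p.2 - q.2), dist_nonneg (x := p.1) (y := q.1)])
  rwa [Real.sqrt_sq (by positivity : (0:ℝ) ≤ dist p.1 q.1 + |p.2 - q.2|)] at h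

lemma dist_le_distE (p q : X × ℝ) : dist p q ≤ distE p q := by
  rw [Prod.dist_eq]
  apply max_le (dist_fst_le_distE p q)
  rw [Real.dist_eq]
  exact abs_snd_le_distE p q

lemma distE_le_two_mul_dist (p q : X × ℝ) : distE p q ≤ 2 * dist p q := by
  refine (distE_le_add_abs p q).trans ?_
  rw [Prod.dist_eq, two_mul]
  gcongr
  · exact le_max_left _ _
  · rw [← Real.dist_eq]; exact le_max_right _ _

lemma eq_of_distE_le_zero {p q : X × ℝ} (h : distE p q ≤ 0) : p = q := by
  have h1 : dist p.1 q.1 ≤ 0 := (dist_fst_le_distE p q).trans h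
  have h2 : |p.2 - q.2| ≤ 0 := (abs_snd_le_distE p q).trans h
  have : p.2 = q.2 := by
    have := abs_nonneg (p.2 - q.2)
    have : |p.2 - q.2| = 0 := le_antisymm h2 this
    have := abs_eq_zero.mp this
    linarith
  have : p.1 = q.1 := by
    have := dist_nonneg (x := p.1) (y := q.1)
    exact dist_le_zero.mp h1
  exact Prod.ext this ‹p.2 = q.2›

lemma distE_triangle (p q r : X × ℝ) : distE p r ≤ distE p q + distE q r := by
  have h1 : dist p.1 r.1 ≤ dist p.1 q.1 + dist q.1 r.1 := dist_triangle _ _ _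
  have h2 : |p.2 - r.2| ≤ |p.2 - q.2| + |q.2 - r.2| := abs_sub_le _ _ _
  set a := dist p.1 q.1; set b := |p.2 - q.2|
  set c := dist q.1 r.1; set d := |q.2 - r.2|
  have ha : 0 ≤ a := dist_nonneg
  have hb : 0 ≤ b := abs_nonneg _
  have hc : 0 ≤ c := dist_nonneg
  have hd : 0 ≤ d := abs_nonneg _
  have key : distE p r ≤ Real.sqrt ((a + c)^2 + (b + d)^2) := by
    apply Real.sqrt_le_sqrt
    have e1 : (p.2 - r.2)^2 ≤ (b + d)^2 := by
      have := sq_abs (p.2 - r.2)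
      nlinarith [abs_nonneg (p.2 - r.2)]
    nlinarith [dist_nonneg (x := p.1) (y := r.1)]
  refine key.trans ?_
  have hs1 : distE p q = Real.sqrt (a^2 + b^2) := by rw [distE, sq_abs]
  have hs2 : distE q r = Real.sqrt (c^2 + d^2) := by rw [distE, sq_abs]
  rw [hs1, hs2]
  have hx : Real.sqrt (a^2+b^2) ^ 2 = a^2 + b^2 := Real.sq_sqrt (by positivity)
  have hy : Real.sqrt (c^2+d^2) ^ 2 = c^2 + d^2 := Real.sq_sqrt (by positivity)
  have hxy : a*c + b*d ≤ Real.sqrt (a^2+b^2) * Real.sqrt (c^2+d^2) := by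
    have h := Real.sqrt_le_sqrt (show (a*c + b*d)^2 ≤ (a^2+b^2) * (c^2+d^2) by
      nlinarith [sq_nonneg (a*d - b*c)])
    rwa [Real.sqrt_sq (by positivity : (0:ℝ) ≤ a*c + b*d), Real.sqrt_mul (by positivity)] at h
  have h := Real.sqrt_le_sqrt (show (a+c)^2 + (b+d)^2 ≤
      (Real.sqrt (a^2+b^2) + Real.sqrt (c^2+d^2))^2 by
    nlinarith [Real.sqrt_nonneg (a^2+b^2), Real.sqrt_nonneg (c^2+d^2)])
  rwa [Real.sqrt_sq (by positivity : (0:ℝ) ≤ Real.sqrt (a^2+b^2) + Real.sqrt (c^2+d^2))] at h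


lemma zero_mem_slopeSet (f : X → EReal) (u : X) (η : ℝ) : (0:ℝ) ∈ slopeSet f u η := by
  refine ⟨le_refl 0, 1, one_pos, fun p _ => p, ?_, ?_⟩
  · exact (continuous_fst.comp continuous_fst).continuousOn.prodMk
      (continuous_snd.comp continuous_fst).continuousOn |>.congr (fun q _ => rfl)
  · intro p hp t ht
    refine ⟨hp.2, by rw [distE_self]; exact ht.1, by simp⟩

lemma slopeSet_nonempty (f : X → EReal) (u : X) (η : ℝ) : (slopeSet f u η).Nonempty :=
  ⟨0, zero_mem_slopeSet f u η⟩

lemma slopeSet_le_one {f : X → EReal} {u : X} {η : ℝ} (hmem : (u, η) ∈ epiSet f)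
    {σ : ℝ} (hσ : σ ∈ slopeSet f u η) : σ ≤ 1 := by
  obtain ⟨hσ0, δ, hδ, H, _, hH⟩ := hσ
  have hball : (u, η) ∈ ballE (u, η) δ ∩ epiSet f := by
    refine ⟨?_, hmem⟩
    show distE (u, η) (u, η) < δ
    rw [distE_self]; exact hδ
  obtain ⟨_, hd, hdec⟩ := hH (u, η) hball δ ⟨le_of_lt hδ, le_refl δ⟩
  have h1 : |(H (u, η) δ).2 - η| ≤ δ := (abs_snd_le_distE _ _).trans hd
  have h2 : σ * δ ≤ η - (H (u, η) δ).2 := by linarith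
  have := abs_le.mp h1
  have : σ * δ ≤ δ := by linarith [this.1, this.2]
  exact le_of_mul_le_mul_right (by linarith) hδ

lemma slopeSet_bddAbove {f : X → EReal} {u : X} {η : ℝ} (hmem : (u, η) ∈ epiSet f) :
    BddAbove (slopeSet f u η) :=
  ⟨1, fun _ h => slopeSet_le_one hmem h⟩

lemma slopeG_nonneg {f : X → EReal} {u : X} {η : ℝ} (hmem : (u, η) ∈ epiSet f) :
    0 ≤ slopeG f u η :=
  le_csSup (slopeSet_bddAbove hmem) (zero_mem_slopeSet f u η)

/-- Transfer of an admissible σ to nearby points of the epigraph. -/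
lemma slopeSet_transfer {f : X → EReal} {u : X} {η σ : ℝ} (hσ : σ ∈ slopeSet f u η) :
    ∃ δ > 0, ∀ u' η', (u', η') ∈ epiSet f → distE (u', η') (u, η) < δ →
      σ ∈ slopeSet f u' η' := by
  obtain ⟨hσ0, δ, hδ, H, hHc, hH⟩ := hσ
  refine ⟨δ/2, by linarith, fun u' η' hepi hnear => ?_⟩
  have hsub : ballE (u', η') (δ/2) ∩ epiSet f ⊆ ballE (u, η) δ ∩ epiSet f := by
    rintro q ⟨hq1, hq2⟩
    refine ⟨?_, hq2⟩
    have := distE_triangle q (u', η') (u, η)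
    simp only [ballE, Set.mem_setOf_eq] at hq1 ⊢
    linarith
  refine ⟨hσ0, δ/2, by linarith, H, ?_, ?_⟩
  · exact hHc.mono (Set.prod_mono hsub (Set.Icc_subset_Icc_right (by linarith)))
  · intro p hp t ht
    exact hH p (hsub hp) t ⟨ht.1, ht.2.trans (by linarith)⟩

lemma exists_gt_of_slopeG_pos {f : X → EReal} {u : X} {η b : ℝ}
    (h : b < slopeG f u η) : ∃ σ ∈ slopeSet f u η, b < σ :=
  exists_lt_of_lt_csSup (slopeSet_nonempty f u η) h

lemma slopeG_le_one {f : X → EReal} {u : X} {η : ℝ} (hmem : (u, η) ∈ epiSet f) :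
    slopeG f u η ≤ 1 :=
  csSup_le (slopeSet_nonempty f u η) (fun _ h => slopeSet_le_one hmem h)


end AuxLemmas

/-- Ekeland's variational principle (weak form). -/
lemma ekeland_aux {α : Type*} [MetricSpace α] [CompleteSpace α]
    (F : α → ℝ) (hF : Continuous F) (b : ℝ) (hb : ∀ x, b ≤ F x)
    (lam : ℝ) (hlam : 0 < lam) (x₀ : α) :
    ∃ x, F x ≤ F x₀ ∧ ∀ y, F x - lam * dist x y ≤ F y := by
  -- the order: y ≼ x iff F y + lam * dist x y ≤ F x
  set R : α → α → Prop := fun y x => F y + lam * dist x y ≤ F x with hR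
  have Rrefl : ∀ x, R x x := fun x => by simp [hR]
  have Rtrans : ∀ {z y x}, R z y → R y x → R z x := by
    intro z y x h1 h2
    have := dist_triangle x y z
    simp only [hR] at *
    nlinarith [dist_comm x y, dist_comm y z, dist_comm x z, dist_triangle x y z]
  -- infimum over the section
  have hbdd : ∀ x, BddBelow (F '' {y | R y x}) := fun x => ⟨b, by rintro _ ⟨y, _, rfl⟩; exact hb y⟩
  have hne : ∀ x, (F '' {y | R y x}).Nonempty := fun x => ⟨F x, x, Rrefl x, rfl⟩
  have key : ∀ (x : α) (n : ℕ), ∃ y, R y x ∧ F y ≤ sInf (F '' {z | R z x}) + (1/2)^n := by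
    intro x n
    obtain ⟨v, hv, hv2⟩ := Real.lt_sInf_add_pos (hne x) (show (0:ℝ) < (1/2)^n by positivity)
    obtain ⟨y, hy, rfl⟩ := hv
    exact ⟨y, hy, le_of_lt hv2⟩
  choose nxt hnxt1 hnxt2 using key
  set u : ℕ → α := fun n => Nat.rec x₀ (fun n x => nxt x n) n with hu
  have hun : ∀ n, u (n+1) = nxt (u n) n := fun n => rfl
  have hstep : ∀ n, R (u (n+1)) (u n) := fun n => by rw [hun]; exact hnxt1 (u n) n
  have hchain : ∀ m n, n ≤ m → R (u m) (u n) := by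
    intro m n h
    induction m with
    | zero => cases Nat.le_zero.mp h; exact Rrefl _
    | succ k ih =>
      rcases Nat.lt_or_ge n (k+1) with h' | h'
      · exact Rtrans (hstep k) (ih (Nat.lt_succ_iff.mp h'))
      · have : n = k+1 := le_antisymm h h'
        subst this; exact Rrefl _
  -- F (u n) decreasing and bounded below
  have hFdec : ∀ m n, n ≤ m → F (u m) ≤ F (u n) := by
    intro m n h
    have := hchain m n h
    simp only [hR] at this
    nlinarith [dist_nonneg (x := u n) (y := u m)]
  have hdist : ∀ m n, n ≤ m → lam * dist (u n) (u m) ≤ F (u n) - F (u m) := by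
    intro m n h; have := hchain m n h; simp only [hR] at this; linarith
  -- F (u n) converges
  have hmono : Antitone (fun n => F (u n)) := fun n m h => hFdec m n h
  have hFbdd : BddBelow (Set.range fun n => F (u n)) := ⟨b, by rintro _ ⟨n, rfl⟩; exact hb _⟩
  obtain ⟨l, hl⟩ : ∃ l, Tendsto (fun n => F (u n)) atTop (nhds l) :=
    ⟨_, tendsto_atTop_ciInf hmono hFbdd⟩
  -- u is Cauchy
  have hcauchyF : CauchySeq (fun n => F (u n)) := hl.cauchySeq
  have hcauchy : CauchySeq u := by
    rw [Metric.cauchySeq_iff'] at hcauchyF ⊢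
    intro ε hε
    obtain ⟨N, hN⟩ := hcauchyF (lam * ε) (by positivity)
    refine ⟨N, fun n hn => ?_⟩
    have h1 := hdist n N hn
    have h2 := hN n hn
    rw [Real.dist_eq, abs_lt] at h2
    have : lam * dist (u N) (u n) < lam * ε := by linarith [h2.1, h2.2]
    have := (mul_lt_mul_iff_right₀ hlam).mp this
    rwa [dist_comm]
  obtain ⟨x, hx⟩ := cauchySeq_tendsto_of_complete hcauchy
  -- x ≼ u n for all n
  have hxR : ∀ n, R x (u n) := by
    intro n
    have : Tendsto (fun m => F (u m) + lam * dist (u n) (u m)) atTop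
        (nhds (F x + lam * dist (u n) x)) := by
      exact ((hF.tendsto x).comp hx).add
        (((continuous_const.dist continuous_id).tendsto x).comp hx |>.const_mul lam)
    refine le_of_tendsto this ?_
    filter_upwards [eventually_ge_atTop n] with m hm
    exact hchain m n hm
  refine ⟨x, ?_, ?_⟩
  · have h := hxR 0
    have h0 : u 0 = x₀ := rfl
    rw [h0] at h
    simp only [hR] at h
    nlinarith [dist_nonneg (x := x₀) (y := x)]
  · intro y
    by_contra hcon
    push_neg at hcon
    have hyRx : R y x := by simp only [hR]; nlinarith [dist_comm x y]
    -- then y ≼ u (n+1) hence F y ≥ sInf section of u n... gives F y ≥ l ≥ F x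
    have hyn : ∀ n, R y (u n) := fun n => Rtrans hyRx (hxR n)
    have hFy : ∀ n, F (u (n+1)) - (1/2)^n ≤ F y := by
      intro n
      have h1 : F (u (n+1)) ≤ sInf (F '' {z | R z (u n)}) + (1/2)^n := by
        rw [hun]; exact hnxt2 (u n) n
      have h2 : sInf (F '' {z | R z (u n)}) ≤ F y :=
        csInf_le (hbdd (u n)) ⟨y, hyn n, rfl⟩
      linarith
    have hlim : Tendsto (fun n => F (u (n+1)) - (1/2)^n) atTop (nhds (l - 0)) :=
      (hl.comp (tendsto_add_atTop_nat 1)).sub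
        (tendsto_pow_atTop_nhds_zero_of_lt_one (by norm_num) (by norm_num))
    have hFyl : l ≤ F y := by
      have := le_of_tendsto hlim (Eventually.of_forall hFy)
      simpa using this
    have hFxl : F x ≤ l := by
      -- F x ≤ F (u n) for all n? F continuous, x = lim u n, F (u n) → l; also R x (u n)
      have : ∀ n, F x ≤ F (u n) := by
        intro n; have := hxR n; simp only [hR] at this
        nlinarith [dist_nonneg (x := u n) (y := x)]
      exact ge_of_tendsto' hl this
    -- hcon : F y < F x - lam * dist x y ≤ F x ≤ l ≤ F y, with dist ≥ 0
    nlinarith [dist_nonneg (x := x) (y := y), hcon]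


/-- η ≤ c : every admissible path crosses the sphere. -/
lemma eta_le_c {X : Type*} [NormedAddCommGroup X] [NormedSpace ℝ X]
    (f : X → EReal) (w : X) (η r : ℝ) (hr : 0 < r)
    (hsphere : ∀ u : X, ‖u‖ = r → (η : EReal) < f u) (hw2 : r < ‖w‖)
    (Γ : Set (ℝ → X)) (hΓ : Γ = {γ | ContinuousOn γ (Icc 0 1) ∧ γ 0 = 0 ∧ γ 1 = w})
    (c : ℝ) (hc : (c : EReal) = ⨅ γ ∈ Γ, ⨆ t ∈ Icc (0:ℝ) 1, f (γ t)) :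
    η ≤ c := by
  have key : ∀ γ ∈ Γ, (η : EReal) ≤ ⨆ t ∈ Icc (0:ℝ) 1, f (γ t) := by
    intro γ hγ
    rw [hΓ] at hγ
    obtain ⟨hcont, h0, h1⟩ := hγ
    have hnorm : ContinuousOn (fun t => ‖γ t‖) (Icc 0 1) := hcont.norm
    have hmem : r ∈ Icc (‖γ 0‖) (‖γ 1‖) := by
      rw [h0, h1]; simp; constructor <;> [exact le_of_lt hr; exact le_of_lt hw2]
    obtain ⟨t, ht, htr⟩ := intermediate_value_Icc (by norm_num : (0:ℝ) ≤ 1) hnorm hmem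
    have hft := hsphere (γ t) htr
    calc (η : EReal) ≤ f (γ t) := le_of_lt hft
      _ ≤ ⨆ t ∈ Icc (0:ℝ) 1, f (γ t) := le_iSup₂ (f := fun t _ => f (γ t)) t ht
  have : (η : EReal) ≤ (c : EReal) := by
    rw [hc]; exact le_iInf₂ key
  exact_mod_cast this

set_option maxHeartbeats 2000000 in
lemma exists_ps_point {X : Type*} [NormedAddCommGroup X] [NormedSpace ℝ X] [CompleteSpace X]
    (f : X → EReal) (hlsc : LowerSemicontinuous f) (hbot : ∀ x, f x ≠ ⊥)
    (h33 : cond33 f)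
    (w : X) (η r : ℝ) (hη : 0 < η) (hr : 0 < r)
    (hf0 : f 0 < (η : EReal))
    (hsphere : ∀ u : X, ‖u‖ = r → (η : EReal) < f u)
    (hw1 : f w < (η : EReal)) (hw2 : r < ‖w‖)
    (Γ : Set (ℝ → X))
    (hΓ : Γ = {γ | ContinuousOn γ (Icc 0 1) ∧ γ 0 = 0 ∧ γ 1 = w})
    (c : ℝ) (hc : (c : EReal) = ⨅ γ ∈ Γ, ⨆ t ∈ Icc (0:ℝ) 1, f (γ t))
    (ε : ℝ) (hε0 : 0 < ε) (hε1 : 2*ε < 1)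
    (hε3 : ε^2 < η - (f 0).toReal) (hε4 : ε^2 < η - (f w).toReal) :
    ∃ (u : X) (β : ℝ), f u = (β : EReal) ∧ |β - c| ≤ ε^2 ∧ slopeG f u β ≤ 2*ε := by
  classical
  have hηc : η ≤ c := eta_le_c f w η r hr hsphere hw2 Γ hΓ c hc
  set a0 : ℝ := (f 0).toReal with ha0def
  set a1 : ℝ := (f w).toReal with ha1def
  have hf0top : f 0 ≠ ⊤ := ne_top_of_lt (lt_of_lt_of_le hf0 le_top)
  have hfwtop : f w ≠ ⊤ := ne_top_of_lt (lt_of_lt_of_le hw1 le_top)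
  have ha0 : f 0 = (a0 : EReal) := (EReal.coe_toReal hf0top (hbot 0)).symm
  have ha1 : f w = (a1 : EReal) := (EReal.coe_toReal hfwtop (hbot w)).symm
  have ha0η : a0 < η := by
    rw [ha0] at hf0; exact_mod_cast hf0
  have ha1η : a1 < η := by
    rw [ha1] at hw1; exact_mod_cast hw1
  -- the path space
  set T := ↥(Icc (0:ℝ) 1) with hT
  haveI : CompactSpace T := isCompact_iff_compactSpace.mp isCompact_Icc
  haveI : Nonempty T := ⟨⟨0, by norm_num⟩⟩
  set e0 : T := ⟨0, by norm_num⟩ with he0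
  set e1 : T := ⟨1, by norm_num⟩ with he1
  have hepiC : IsClosed (epiSet f) := by
    have h1 : IsClosed {p : X × EReal | f p.1 ≤ p.2} := hlsc.isClosed_epigraph
    have h2 : epiSet f = (fun p : X × ℝ => (p.1, (p.2 : EReal))) ⁻¹' {p : X × EReal | f p.1 ≤ p.2} := rfl
    rw [h2]
    exact h1.preimage (continuous_fst.prodMk (continuous_coe_real_ereal.comp continuous_snd))
  set Φ : C(T, X × ℝ) → ℝ := fun γ => ⨆ t, (γ t).2 with hΦdef
  have hΦbdd : ∀ γ : C(T, X × ℝ), BddAbove (range fun t => (γ t).2) := by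
    intro γ
    exact (isCompact_range ((continuous_snd.comp γ.continuous))).bddAbove
  have hΦle : ∀ (γ : C(T, X × ℝ)) (t : T), (γ t).2 ≤ Φ γ :=
    fun γ t => le_ciSup (hΦbdd γ) t
  have hΦsup : ∀ (γ : C(T, X × ℝ)) (b : ℝ), (∀ t, (γ t).2 ≤ b) → Φ γ ≤ b :=
    fun γ b h => ciSup_le h
  have hΦlip : ∀ γ γ' : C(T, X × ℝ), Φ γ ≤ Φ γ' + dist γ γ' := by
    intro γ γ'
    apply hΦsup
    intro t
    have h1 := ContinuousMap.dist_apply_le_dist (f := γ) (g := γ') t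
    have h2 : |(γ t).2 - (γ' t).2| ≤ dist (γ t) (γ' t) := by
      rw [Prod.dist_eq, ← Real.dist_eq]
      exact le_max_right _ _
    have := abs_le.mp h2
    linarith [hΦle γ' t, this.1, this.2]
  have hΦcont : Continuous Φ := by
    rw [Metric.continuous_iff]
    intro γ ε' hε'
    refine ⟨ε', hε', fun γ' hd => ?_⟩
    have h1 := hΦlip γ γ'
    have h2 := hΦlip γ' γ
    rw [Real.dist_eq, abs_lt]
    rw [dist_comm] at hd
    constructor <;> nlinarith [dist_comm γ γ', hd]
  set M : Set C(T, X × ℝ) :=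
    {γ | (∀ t, γ t ∈ epiSet f) ∧ γ e0 = (0, a0) ∧ γ e1 = (w, a1)} with hM
  have hMclosed : IsClosed M := by
    have h1 : IsClosed {γ : C(T, X × ℝ) | ∀ t, γ t ∈ epiSet f} := by
      have : {γ : C(T, X × ℝ) | ∀ t, γ t ∈ epiSet f} =
          ⋂ t, (fun γ : C(T, X × ℝ) => γ t) ⁻¹' epiSet f := by
        ext γ; simp [Set.mem_iInter]
      rw [this]
      exact isClosed_iInter fun t => hepiC.preimage (continuous_eval_const t)
    have h2 : IsClosed {γ : C(T, X × ℝ) | γ e0 = (0, a0)} :=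
      isClosed_singleton.preimage (continuous_eval_const e0)
    have h3 : IsClosed {γ : C(T, X × ℝ) | γ e1 = (w, a1)} :=
      isClosed_singleton.preimage (continuous_eval_const e1)
    exact (h1.inter (h2.inter h3))
  have hclamp : Continuous (fun x : ℝ => min 1 (max 0 x)) :=
    continuous_const.min (continuous_const.max continuous_id)
  have hclampmem : ∀ x : ℝ, min 1 (max 0 x) ∈ Icc (0:ℝ) 1 := fun x =>
    ⟨le_min (by norm_num) (le_max_left 0 x), min_le_left 1 _⟩
  have hclamp0 : min 1 (max 0 (0:ℝ)) = 0 := by norm_num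
  have hclamp1 : min 1 (max 0 (1:ℝ)) = 1 := by norm_num
  have hΦgec : ∀ γ ∈ M, c ≤ Φ γ := by
    intro γ hγ
    set pr : ℝ → X := fun x => (γ ⟨min 1 (max 0 x), hclampmem x⟩).1 with hpr
    have hprc : Continuous pr := by
      apply continuous_fst.comp
      exact γ.continuous.comp (hclamp.subtype_mk hclampmem)
    have hprΓ : pr ∈ Γ := by
      rw [hΓ]
      refine ⟨hprc.continuousOn, ?_, ?_⟩
      · show (γ ⟨min 1 (max 0 (0:ℝ)), _⟩).1 = 0
        have : (⟨min 1 (max 0 (0:ℝ)), hclampmem 0⟩ : T) = e0 := Subtype.ext hclamp0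
        rw [this, hγ.2.1]
      · show (γ ⟨min 1 (max 0 (1:ℝ)), _⟩).1 = w
        have : (⟨min 1 (max 0 (1:ℝ)), hclampmem 1⟩ : T) = e1 := Subtype.ext hclamp1
        rw [this, hγ.2.2]
    have h1 : (c : EReal) ≤ ⨆ x ∈ Icc (0:ℝ) 1, f (pr x) := by
      rw [hc]
      exact iInf₂_le pr hprΓ
    have h2 : (⨆ x ∈ Icc (0:ℝ) 1, f (pr x)) ≤ (Φ γ : EReal) := by
      apply iSup₂_le
      intro x hx
      have hepi := hγ.1 ⟨min 1 (max 0 x), hclampmem x⟩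
      refine le_trans hepi ?_
      exact_mod_cast hΦle γ ⟨min 1 (max 0 x), hclampmem x⟩
    exact_mod_cast h1.trans h2
  have hMne : ∃ γ₀ ∈ M, Φ γ₀ ≤ c + ε^2 := by
    set Mt : ℝ := c + ε^2 with hMt
    have hcMt : (⨅ γ ∈ Γ, ⨆ x ∈ Icc (0:ℝ) 1, f (γ x)) < ((Mt : ℝ) : EReal) := by
      rw [← hc]
      exact_mod_cast (by nlinarith : c < Mt)
    rw [iInf_lt_iff] at hcMt
    obtain ⟨γp, hcMt⟩ := hcMt
    rw [iInf_lt_iff] at hcMt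
    obtain ⟨hγpΓ, hsup⟩ := hcMt
    rw [hΓ] at hγpΓ
    obtain ⟨hγpc, hγp0, hγp1⟩ := hγpΓ
    have hMta0 : a0 < Mt := by nlinarith
    have hMta1 : a1 < Mt := by nlinarith
    set γglob : ℝ → X := fun x => γp (min 1 (max 0 x)) with hγglob
    have hγglobc : Continuous γglob :=
      hγpc.comp_continuous hclamp hclampmem
    set path0 : ℝ → X × ℝ := fun x =>
      if x ≤ 1/3 then ((0:X), a0 + (3*x)*(Mt - a0))
      else if x ≤ 2/3 then (γglob (3*x - 1), Mt)
      else (w, Mt + (3*x-2)*(a1 - Mt)) with hpath0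
    have hpc : Continuous path0 := by
      have c1 : Continuous fun x : ℝ => a0 + (3*x)*(Mt - a0) :=
        continuous_const.add ((continuous_const.mul continuous_id).mul continuous_const)
      have c2 : Continuous fun x : ℝ => 3*x - 1 :=
        (continuous_const.mul continuous_id).sub continuous_const
      have c3 : Continuous fun x : ℝ => Mt + (3*x-2)*(a1 - Mt) :=
        continuous_const.add ((((continuous_const.mul continuous_id)).sub
          continuous_const).mul continuous_const)
      apply Continuous.if_le
      · exact continuous_const.prodMk c1
      · apply Continuous.if_le
        · exact (hγglobc.comp c2).prodMk continuous_const
        · exact continuous_const.prodMk c3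
        · exact continuous_id
        · exact continuous_const
        · intro x hx
          subst hx
          have : γglob (3*(2/3 : ℝ) - 1) = w := by
            rw [hγglob]
            norm_num
            rw [hγp1]
          rw [this]
          norm_num
      · exact continuous_id
      · exact continuous_const
      · intro x hx
        subst hx
        rw [if_pos (by norm_num : (1/3:ℝ) ≤ 2/3)]
        have : γglob (3*(1/3 : ℝ) - 1) = 0 := by
          rw [hγglob]
          norm_num
          rw [hγp0]
        rw [this]
        norm_num
    have hval : ∀ t : T, path0 ↑t ∈ epiSet f ∧ (path0 ↑t).2 ≤ Mt := by
      intro t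
      obtain ⟨ht0, ht1⟩ := t.2
      rw [hpath0]
      simp only
      split_ifs with h1 h2
      · constructor
        · show f 0 ≤ ((a0 + (3*↑t)*(Mt - a0) : ℝ) : EReal)
          rw [ha0]
          exact_mod_cast (by nlinarith : a0 ≤ a0 + (3*(t:ℝ))*(Mt - a0))
        · show a0 + (3*(t:ℝ))*(Mt - a0) ≤ Mt
          nlinarith
      · have hs : min 1 (max 0 (3*(t:ℝ) - 1)) = 3*(t:ℝ) - 1 := by
          rw [max_eq_right (by linarith), min_eq_right (by linarith)]
        have hmem : 3*(t:ℝ) - 1 ∈ Icc (0:ℝ) 1 := ⟨by linarith, by linarith⟩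
        constructor
        · show f (γglob (3*(t:ℝ) - 1)) ≤ ((Mt : ℝ) : EReal)
          rw [hγglob]
          simp only [hs]
          refine le_trans (le_iSup₂ (f := fun x (_ : x ∈ Icc (0:ℝ) 1) => f (γp x))
            (3*(t:ℝ) - 1) hmem) (le_of_lt hsup)
        · exact le_refl Mt
      · constructor
        · show f w ≤ ((Mt + (3*(t:ℝ)-2)*(a1 - Mt) : ℝ) : EReal)
          rw [ha1]
          exact_mod_cast (by nlinarith : a1 ≤ Mt + (3*(t:ℝ)-2)*(a1 - Mt))
        · show Mt + (3*(t:ℝ)-2)*(a1 - Mt) ≤ Mt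
          nlinarith
    refine ⟨⟨fun t => path0 ↑t, hpc.comp continuous_subtype_val⟩, ⟨?_, ?_, ?_⟩, ?_⟩
    · intro t
      exact (hval t).1
    · show path0 ((e0 : T) : ℝ) = ((0:X), a0)
      have h0 : ((e0 : T) : ℝ) = 0 := rfl
      rw [h0, hpath0]
      simp only
      rw [if_pos (by norm_num : (0:ℝ) ≤ 1/3)]
      norm_num
    · show path0 ((e1 : T) : ℝ) = (w, a1)
      have h0 : ((e1 : T) : ℝ) = 1 := rfl
      rw [h0, hpath0]
      simp only
      rw [if_neg (by norm_num : ¬ ((1:ℝ) ≤ 1/3)), if_neg (by norm_num : ¬ ((1:ℝ) ≤ 2/3))]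
      norm_num
    · exact hΦsup _ Mt (fun t => (hval t).2)
  obtain ⟨γ₀, hγ₀M, hγ₀Φ⟩ := hMne
  -- Ekeland
  haveI : CompleteSpace ↥M := hMclosed.completeSpace_coe
  obtain ⟨gs, hg1, hg2⟩ := ekeland_aux (fun γ : ↥M => Φ γ.1)
    (hΦcont.comp continuous_subtype_val) c (fun γ => hΦgec γ.1 γ.2) ε hε0 ⟨γ₀, hγ₀M⟩
  set g : C(T, X × ℝ) := gs.1 with hgdef
  have hgM : g ∈ M := gs.2
  set m : ℝ := Φ g with hmdef
  have hmc : m ≤ c + ε^2 := le_trans hg1 hγ₀Φ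
  have hcm : c ≤ m := hΦgec g hgM
  set K : Set T := {t | m - ε^2 ≤ (g t).2} with hK
  have hKcl : IsClosed K := by
    have : K = (fun t => (g t).2) ⁻¹' Ici (m - ε^2) := rfl
    rw [this]
    exact isClosed_Ici.preimage (continuous_snd.comp g.continuous)
  have hKne : K.Nonempty := by
    obtain ⟨ts, hts⟩ := (continuous_snd.comp g.continuous).exists_forall_ge
      (by rw [Filter.cocompact_eq_bot]; exact tendsto_bot)
    refine ⟨ts, ?_⟩
    have hm : m ≤ (g ts).2 := hΦsup g _ (fun t => hts t)
    show m - ε^2 ≤ (g ts).2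
    nlinarith
  have hK0 : e0 ∉ K := by
    intro h
    have h2 : (g e0).2 = a0 := by rw [hgM.2.1]
    have h3 : m - ε^2 ≤ a0 := by rw [← h2]; exact h
    nlinarith
  have hK1 : e1 ∉ K := by
    intro h
    have h2 : (g e1).2 = a1 := by rw [hgM.2.2]
    have h3 : m - ε^2 ≤ a1 := by rw [← h2]; exact h
    nlinarith
  -- main claim
  have main : ∃ t ∈ K, slopeG f (g t).1 (g t).2 ≤ 2*ε := by
    by_contra hcon
    push_neg at hcon
    have hsel : ∀ t : ↥K, ∃ σ, ∃ δ, ∃ H : X × ℝ → ℝ → X × ℝ, (2*ε < σ) ∧ 0 < δ ∧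
        ContinuousOn (fun q : (X × ℝ) × ℝ => H q.1 q.2)
          ((ballE ((g t.1).1, (g t.1).2) δ ∩ epiSet f) ×ˢ Icc 0 δ) ∧
        ∀ p ∈ ballE ((g t.1).1, (g t.1).2) δ ∩ epiSet f, ∀ τ ∈ Icc (0:ℝ) δ,
          H p τ ∈ epiSet f ∧ distE (H p τ) p ≤ τ ∧ (H p τ).2 ≤ p.2 - σ * τ := by
      intro t
      obtain ⟨σ, hσmem, hσgt⟩ := exists_gt_of_slopeG_pos (hcon t.1 t.2)
      obtain ⟨hσ0, δ, hδ, H, hHcont, hHprop⟩ := hσmem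
      exact ⟨σ, δ, H, hσgt, hδ, hHcont, hHprop⟩
    choose σs δs Hs hσgt hδpos hHc hHp using hsel
    set V : ↥K → Set T := fun t =>
      {s : T | dist (g s) (g t.1) < δs t / 8} ∩ ({e0, e1} : Set T)ᶜ with hV
    have hVopen : ∀ t, IsOpen (V t) := by
      intro t
      apply IsOpen.inter
      · exact isOpen_lt (g.continuous.dist continuous_const) continuous_const
      · exact (Set.toFinite ({e0, e1} : Set T)).isClosed.isOpen_compl
    have hVmem : ∀ t : ↥K, t.1 ∈ V t := by
      intro t
      constructor
      · show dist (g t.1) (g t.1) < δs t / 8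
        rw [dist_self]
        linarith [hδpos t]
      · intro hmem
        rcases hmem with h | h
        · exact hK0 (h ▸ t.2)
        · rcases h with h
          exact hK1 (h ▸ t.2)
    have hVdist : ∀ t : ↥K, ∀ x ∈ V t, distE (g x) (g t.1) < δs t / 4 := by
      intro t x hx
      have h1 : dist (g x) (g t.1) < δs t / 8 := hx.1
      have h2 := distE_le_two_mul_dist (g x) (g t.1)
      linarith
    have hKcp : IsCompact K := hKcl.isCompact
    obtain ⟨τF, hτF⟩ := hKcp.elim_finite_subcover V hVopen
      (fun x hx => mem_iUnion.mpr ⟨⟨x, hx⟩, hVmem ⟨x, hx⟩⟩)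
    haveI hτne : Nonempty ↥τF := by
      obtain ⟨t0, ht0⟩ := hKne
      obtain ⟨i, hi, -⟩ := mem_iUnion₂.mp (hτF ht0)
      exact ⟨⟨i, hi⟩⟩
    obtain ⟨ρ, hρsub⟩ := PartitionOfUnity.exists_isSubordinate (ι := ↥τF) (X := T)
      hKcl (fun i => V i.1) (fun i => hVopen i.1)
      (by
        intro x hx
        obtain ⟨i, hi, hxi⟩ := mem_iUnion₂.mp (hτF hx)
        exact mem_iUnion.mpr ⟨⟨i, hi⟩, hxi⟩)
    have hρ0 : ∀ (i : ↥τF) (t : T), 0 ≤ ρ i t := fun i t => ρ.nonneg i t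
    have hρ1 : ∀ (i : ↥τF) (t : T), ρ i t ≤ 1 := fun i t => ρ.le_one i t
    have hρsum1 : ∀ t ∈ K, ∑ i : ↥τF, ρ i t = 1 := by
      intro t ht
      rw [← finsum_eq_sum_of_fintype]
      exact ρ.sum_eq_one ht
    have hρsumle : ∀ t, ∑ i : ↥τF, ρ i t ≤ 1 := by
      intro t
      rw [← finsum_eq_sum_of_fintype]
      exact ρ.sum_le_one t
    have hρzero : ∀ (i : ↥τF), ∀ t ∉ V i.1, ρ i t = 0 := by
      intro i t ht
      have h1 : t ∉ tsupport (ρ i) := fun h => ht (hρsub i h)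
      exact image_eq_zero_of_notMem_tsupport h1
    set sδ : ℝ := min (ε/2)
      ((Finset.univ : Finset ↥τF).inf' Finset.univ_nonempty (fun i => δs i.1 / 2)) with hsδdef
    have hsδ0 : 0 < sδ := by
      apply lt_min (by linarith)
      rw [Finset.lt_inf'_iff]
      intro i _
      linarith [hδpos i.1]
    have hsδi : ∀ i : ↥τF, sδ ≤ δs i.1 / 2 := fun i =>
      (min_le_right _ _).trans (Finset.inf'_le _ (Finset.mem_univ i))
    have hsδε : sδ ≤ ε/2 := min_le_left _ _
    set ψ : List ↥τF → T → ℝ := fun l t => (l.map (fun i => ρ i t)).sum with hψdef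
    have hψnil : ∀ t, ψ [] t = 0 := fun t => rfl
    have hψcons : ∀ i l t, ψ (i::l) t = ρ i t + ψ l t := fun i l t => rfl
    have hψ0 : ∀ l t, 0 ≤ ψ l t := by
      intro l t
      induction l with
      | nil => rw [hψnil]
      | cons i l ih =>
        rw [hψcons]
        have := hρ0 i t
        linarith
    have hψle1 : ∀ (l : List ↥τF), l.Nodup → ∀ t, ψ l t ≤ 1 := by
      intro l hl t
      have h1 : ψ l t = ∑ i ∈ l.toFinset, ρ i t := (List.sum_toFinset _ hl).symm
      rw [h1]
      refine le_trans (Finset.sum_le_sum_of_subset_of_nonneg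
        (Finset.subset_univ _) (fun i _ _ => hρ0 i t)) (hρsumle t)
    have hψuniv : ∀ t ∈ K, ψ (Finset.univ : Finset ↥τF).toList t = 1 := by
      intro t ht
      have h1 : ψ (Finset.univ : Finset ↥τF).toList t = ∑ i : ↥τF, ρ i t :=
        Finset.sum_map_toList _ _
      rw [h1]
      exact hρsum1 t ht
    set step : ↥τF → (T → X × ℝ) → T → X × ℝ := fun i G t =>
      if t ∈ V i.1 then Hs i.1 (G t) (sδ * ρ i t) else G t with hstepdef
    set D : List ↥τF → T → X × ℝ := fun l => l.foldr step (fun t => g t) with hDdef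
    have hDnil : ∀ t, D [] t = g t := fun t => rfl
    have hDcons : ∀ i l, D (i::l) = step i (D l) := fun i l => rfl
    have key : ∀ l : List ↥τF, l.Nodup →
        Continuous (D l) ∧ (∀ t, D l t ∈ epiSet f) ∧
        (∀ t, distE (D l t) (g t) ≤ sδ * ψ l t) ∧
        (∀ t, (D l t).2 ≤ (g t).2 - 2*ε*(sδ * ψ l t)) := by
      intro l hl
      induction l with
      | nil =>
        refine ⟨g.continuous, hgM.1, fun t => ?_, fun t => ?_⟩
        · rw [hψnil, mul_zero]
          show distE (g t) (g t) ≤ 0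
          rw [distE_self]
        · rw [hψnil, mul_zero, mul_zero]
          show (g t).2 ≤ (g t).2 - 0
          linarith
      | cons i l ih =>
        have hl' : l.Nodup := (List.nodup_cons.mp hl).2
        obtain ⟨ihc, ihe, ihd, ihv⟩ := ih hl'
        have hdom : ∀ t ∈ V i.1,
            D l t ∈ ballE ((g i.1.1).1, (g i.1.1).2) (δs i.1) ∩ epiSet f := by
          intro t ht
          refine ⟨?_, ihe t⟩
          show distE (D l t) ((g i.1.1).1, (g i.1.1).2) < δs i.1
          rw [Prod.mk.eta]
          have h1 : distE (D l t) (g t) ≤ sδ * ψ l t := ihd t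
          have h2 : distE (g t) (g i.1.1) < δs i.1 / 4 := hVdist i.1 t ht
          have h4 := distE_triangle (D l t) (g t) (g i.1.1)
          have h6 : ψ l t ≤ 1 := hψle1 l hl' t
          have h7 : sδ * ψ l t ≤ sδ := by nlinarith [hψ0 l t]
          have h8 := hsδi i
          linarith
        have htime : ∀ t : T, sδ * ρ i t ∈ Icc (0:ℝ) (δs i.1) := by
          intro t
          constructor
          · exact mul_nonneg hsδ0.le (hρ0 i t)
          · have h1 := hρ1 i t
            have h2 := hsδi i
            have h3 := hρ0 i t
            nlinarith [hδpos i.1]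
        have heqV : ∀ x ∈ V i.1, D (i::l) x = Hs i.1 (D l x) (sδ * ρ i x) := by
          intro x hx
          rw [hDcons]
          show (if x ∈ V i.1 then Hs i.1 (D l x) (sδ * ρ i x) else D l x) = _
          rw [if_pos hx]
        have heqW : ∀ x ∉ tsupport (ρ i), D (i::l) x = D l x := by
          intro x hx
          rw [hDcons]
          show (if x ∈ V i.1 then Hs i.1 (D l x) (sδ * ρ i x) else D l x) = D l x
          by_cases hxV : x ∈ V i.1
          · rw [if_pos hxV]
            have h1 : ρ i x = 0 := image_eq_zero_of_notMem_tsupport hx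
            rw [h1, mul_zero]
            exact eq_of_distE_le_zero
              (hHp i (D l x) (hdom x hxV) 0 ⟨le_refl 0, (hδpos i).le⟩).2.1
          · rw [if_neg hxV]
        have hstepc : Continuous (D (i::l)) := by
          rw [continuous_iff_continuousAt]
          intro t0
          by_cases ht0 : t0 ∈ V i.1
          · have hconton : ContinuousOn (fun t => Hs i.1 (D l t) (sδ * ρ i t)) (V i.1) := by
              have hmapsto : MapsTo (fun t => (D l t, sδ * ρ i t)) (V i.1)
                  ((ballE ((g i.1.1).1, (g i.1.1).2) (δs i.1) ∩ epiSet f) ×ˢ Icc 0 (δs i.1)) :=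
                fun t ht => ⟨hdom t ht, htime t⟩
              exact (hHc i).comp
                ((ihc.prodMk (continuous_const.mul (ρ i).continuous)).continuousOn) hmapsto
            have hat : ContinuousAt (fun t => Hs i.1 (D l t) (sδ * ρ i t)) t0 :=
              hconton.continuousAt ((hVopen i.1).mem_nhds ht0)
            apply hat.congr
            filter_upwards [(hVopen i.1).mem_nhds ht0] with x hx
            exact (heqV x hx).symm
          · have ht0W : t0 ∈ (tsupport (ρ i))ᶜ := fun h => ht0 (hρsub i h)
            apply (ihc.continuousAt).congr
            filter_upwards [(isClosed_closure.isOpen_compl).mem_nhds ht0W] with x hx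
            exact (heqW x hx).symm
        have hstepe : ∀ t, D (i::l) t ∈ epiSet f := by
          intro t
          by_cases ht : t ∈ V i.1
          · rw [heqV t ht]
            exact (hHp i (D l t) (hdom t ht) (sδ * ρ i t) (htime t)).1
          · rw [hDcons]
            show (if t ∈ V i.1 then _ else D l t) ∈ epiSet f
            rw [if_neg ht]
            exact ihe t
        have hstepd : ∀ t, distE (D (i::l) t) (g t) ≤ sδ * ψ (i::l) t := by
          intro t
          rw [hψcons, mul_add]
          by_cases ht : t ∈ V i.1
          · have h1 := (hHp i (D l t) (hdom t ht) (sδ * ρ i t) (htime t)).2.1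
            have h2 := distE_triangle (D (i::l) t) (D l t) (g t)
            rw [heqV t ht] at h2 ⊢
            have h3 := ihd t
            linarith
          · have h1 : ρ i t = 0 := hρzero i t ht
            have h2 : D (i::l) t = D l t := by
              rw [hDcons]
              show (if t ∈ V i.1 then _ else D l t) = D l t
              rw [if_neg ht]
            rw [h2, h1, mul_zero]
            have := ihd t
            linarith
        have hstepv : ∀ t, (D (i::l) t).2 ≤ (g t).2 - 2*ε*(sδ * ψ (i::l) t) := by
          intro t
          rw [hψcons, mul_add]
          by_cases ht : t ∈ V i.1
          · have h1 := (hHp i (D l t) (hdom t ht) (sδ * ρ i t) (htime t)).2.2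
            rw [heqV t ht]
            have h3 := ihv t
            have h4 : 2*ε*(sδ * ρ i t) ≤ σs i * (sδ * ρ i t) := by
              have := hσgt i
              have h5 : 0 ≤ sδ * ρ i t := mul_nonneg hsδ0.le (hρ0 i t)
              nlinarith
            have h6 : 2*ε*(sδ * ρ i t + sδ * ψ l t) = 2*ε*(sδ*ρ i t) + 2*ε*(sδ * ψ l t) := by
              ring
            nlinarith
          · have h1 : ρ i t = 0 := hρzero i t ht
            have h2 : D (i::l) t = D l t := by
              rw [hDcons]
              show (if t ∈ V i.1 then _ else D l t) = D l t
              rw [if_neg ht]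
            rw [h2, h1, mul_zero]
            have := ihv t
            linarith [hε0]
        exact ⟨hstepc, hstepe, hstepd, hstepv⟩
    set L := (Finset.univ : Finset ↥τF).toList with hLdef
    have hLnd : L.Nodup := Finset.nodup_toList _
    obtain ⟨hDc, hDe, hDd, hDv⟩ := key L hLnd
    set γn : C(T, X × ℝ) := ⟨D L, hDc⟩ with hγndef
    have hψend : ∀ t : T, t = e0 ∨ t = e1 → ψ L t = 0 := by
      intro t ht
      rw [hψdef]
      simp only
      apply List.sum_eq_zero
      intro x hx
      obtain ⟨j, hj, rfl⟩ := List.mem_map.mp hx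
      apply hρzero
      intro hVj
      exact hVj.2 (by rcases ht with h | h <;> simp [h])
    have hγnM : γn ∈ M := by
      refine ⟨hDe, ?_, ?_⟩
      · have h0 := hDd e0
        rw [hψend e0 (Or.inl rfl), mul_zero] at h0
        have := eq_of_distE_le_zero h0
        show γn e0 = (0, a0)
        rw [show γn e0 = D L e0 from rfl, this, hgM.2.1]
      · have h0 := hDd e1
        rw [hψend e1 (Or.inr rfl), mul_zero] at h0
        have := eq_of_distE_le_zero h0
        show γn e1 = (w, a1)
        rw [show γn e1 = D L e1 from rfl, this, hgM.2.2]
    have hdistn : dist g γn ≤ sδ := by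
      rw [ContinuousMap.dist_le hsδ0.le]
      intro t
      have h1 := hDd t
      have h2 := dist_le_distE (γn t) (g t)
      have h3 : ψ L t ≤ 1 := hψle1 L hLnd t
      have h4 : dist (g t) (γn t) = dist (γn t) (g t) := dist_comm _ _
      have h5 : sδ * ψ L t ≤ sδ := by nlinarith [hψ0 L t]
      have h6 : dist (γn t) (g t) ≤ sδ := by
        refine le_trans h2 (le_trans ?_ h5)
        exact h1
      rw [h4]
      exact h6
    have hΦn : Φ γn ≤ m - 2*ε*sδ := by
      apply hΦsup
      intro t
      by_cases ht : t ∈ K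
      · have h1 := hDv t
        rw [hψuniv t ht, mul_one] at h1
        have h2 := hΦle g t
        show (γn t).2 ≤ m - 2*ε*sδ
        have : (γn t).2 = (D L t).2 := rfl
        linarith
      · have h1 := hDv t
        have h2 : (g t).2 < m - ε^2 := lt_of_not_ge ht
        have h3 : 0 ≤ 2*ε*(sδ * ψ L t) := by
          have := hψ0 L t
          have := hsδ0.le
          positivity
        have h4 : 2*ε*sδ ≤ ε^2 := by nlinarith
        show (γn t).2 ≤ m - 2*ε*sδ
        have : (γn t).2 = (D L t).2 := rfl
        linarith
    have hek := hg2 ⟨γn, hγnM⟩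
    have hd2 : dist gs (⟨γn, hγnM⟩ : ↥M) = dist g γn := Subtype.dist_eq gs _
    rw [hd2] at hek
    have hΦval : Φ ((⟨γn, hγnM⟩ : ↥M) : C(T, X × ℝ)) = Φ γn := rfl
    rw [hΦval] at hek
    nlinarith [hε0, hsδ0]
  obtain ⟨t, htK, hts⟩ := main
  refine ⟨(g t).1, (g t).2, ?_, ?_, hts⟩
  · -- f = value by cond33
    have hepi : f (g t).1 ≤ ((g t).2 : EReal) := hgM.1 t
    rcases eq_or_lt_of_le hepi with heq | hlt
    · exact heq.symm ▸ heq
    · exfalso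
      have h1 := h33 (g t).1 (g t).2 (by exact hepi) hlt
      linarith
  · have h1 : (g t).2 ≤ m := hΦle g t
    have h2 : m - ε^2 ≤ (g t).2 := htK
    rw [abs_le]
    constructor <;> nlinarith

set_option maxHeartbeats 2000000 in
/-- **Theorem 3.9 (first part), mountain pass.** Let `X` be a Banach space and `f` a lower
semicontinuous function satisfying condition (3.3) with the mountain-pass geometry; if
`c = inf_Γ sup f ∘ γ < +∞` and `f` satisfies `(PS)_c`, then there is a nontrivial critical
point `u` of `f` with `f u = c`. -/
theorem statement6 {X : Type*} [NormedAddCommGroup X] [NormedSpace ℝ X] [CompleteSpace X]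
    (f : X → EReal) (hlsc : LowerSemicontinuous f) (hbot : ∀ x, f x ≠ ⊥)
    (h33 : cond33 f)
    (w : X) (η r : ℝ) (hη : 0 < η) (hr : 0 < r)
    (hf0 : f 0 < (η : EReal))
    (hsphere : ∀ u : X, ‖u‖ = r → (η : EReal) < f u)
    (hw1 : f w < (η : EReal)) (hw2 : r < ‖w‖)
    (Γ : Set (ℝ → X))
    (hΓ : Γ = {γ | ContinuousOn γ (Icc 0 1) ∧ γ 0 = 0 ∧ γ 1 = w})
    (c : ℝ) (hc : (c : EReal) = ⨅ γ ∈ Γ, ⨆ t ∈ Icc (0:ℝ) 1, f (γ t))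
    (hPS : PScond f c) :
    ∃ u : X, u ≠ 0 ∧ f u ≠ ⊤ ∧ wslope f u = 0 ∧ f u = (c : EReal) := by
  classical
  have hηc : η ≤ c := eta_le_c f w η r hr hsphere hw2 Γ hΓ c hc
  set a0 : ℝ := (f 0).toReal with ha0def
  set a1 : ℝ := (f w).toReal with ha1def
  have hf0top : f 0 ≠ ⊤ := ne_top_of_lt (lt_of_lt_of_le hf0 le_top)
  have hfwtop : f w ≠ ⊤ := ne_top_of_lt (lt_of_lt_of_le hw1 le_top)
  have ha0 : f 0 = (a0 : EReal) := (EReal.coe_toReal hf0top (hbot 0)).symm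
  have ha1 : f w = (a1 : EReal) := (EReal.coe_toReal hfwtop (hbot w)).symm
  have ha0η : a0 < η := by rw [ha0] at hf0; exact_mod_cast hf0
  have ha1η : a1 < η := by rw [ha1] at hw1; exact_mod_cast hw1
  -- the epsilon sequence
  set b : ℝ := min (1/4) (min (Real.sqrt ((η - a0)/2)) (Real.sqrt ((η - a1)/2))) with hbdef
  have hb0 : 0 < b := by
    apply lt_min (by norm_num)
    apply lt_min <;> { apply Real.sqrt_pos.mpr; linarith }
  set e : ℕ → ℝ := fun n => min b (1/(n+1)) with hedef
  have he0 : ∀ n, 0 < e n := fun n => lt_min hb0 (by positivity)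
  have heb : ∀ n, e n ≤ b := fun n => min_le_left _ _
  have hen : ∀ n, e n ≤ 1/(n+1) := fun n => min_le_right _ _
  have he14 : ∀ n, e n ≤ 1/4 := fun n => (heb n).trans (min_le_left _ _)
  have he1 : ∀ n, 2 * e n < 1 := fun n => by have := he14 n; linarith
  have he3 : ∀ n, (e n)^2 < η - a0 := by
    intro n
    have h1 : e n ≤ Real.sqrt ((η - a0)/2) :=
      (heb n).trans ((min_le_right _ _).trans (min_le_left _ _))
    have h2 : (e n)^2 ≤ (η - a0)/2 := by
      have := pow_le_pow_left₀ (he0 n).le h1 2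
      rwa [Real.sq_sqrt (by linarith : (0:ℝ) ≤ (η - a0)/2)] at this
    linarith
  have he4 : ∀ n, (e n)^2 < η - a1 := by
    intro n
    have h1 : e n ≤ Real.sqrt ((η - a1)/2) :=
      (heb n).trans ((min_le_right _ _).trans (min_le_right _ _))
    have h2 : (e n)^2 ≤ (η - a1)/2 := by
      have := pow_le_pow_left₀ (he0 n).le h1 2
      rwa [Real.sq_sqrt (by linarith : (0:ℝ) ≤ (η - a1)/2)] at this
    linarith
  have he_to0 : Tendsto e atTop (nhds 0) := by
    apply squeeze_zero (fun n => (he0 n).le) hen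
    exact tendsto_one_div_add_atTop_nhds_zero_nat
  -- the PS sequence
  have hseq : ∀ n : ℕ, ∃ (u : X) (β : ℝ),
      f u = (β : EReal) ∧ |β - c| ≤ (e n)^2 ∧ slopeG f u β ≤ 2 * e n := fun n =>
    exists_ps_point f hlsc hbot h33 w η r hη hr hf0 hsphere hw1 hw2 Γ hΓ c hc
      (e n) (he0 n) (he1 n) (he3 n) (he4 n)
  choose u β hfu hβc hslope using hseq
  have hβtoc : Tendsto β atTop (nhds c) := by
    rw [tendsto_iff_dist_tendsto_zero]
    apply squeeze_zero (fun n => dist_nonneg)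
    · intro n
      show dist (β n) c ≤ e n
      rw [Real.dist_eq]
      have h1 := hβc n
      have h2 : (e n)^2 ≤ e n := by nlinarith [he0 n, he14 n]
      linarith
    · exact he_to0
  have hepin : ∀ n, (u n, β n) ∈ epiSet f := fun n => (hfu n).le
  have htoRn : ∀ n, (f (u n)).toReal = β n := fun n => by rw [hfu n]; exact EReal.toReal_coe _
  have hslope0n : ∀ n, 0 ≤ slopeG f (u n) (β n) := fun n => slopeG_nonneg (hepin n)
  have hwn : ∀ n, wslope f (u n) ≤ ENNReal.ofReal (4 * e n) := by
    intro n
    rw [wslope, htoRn n]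
    have h1 : slopeG f (u n) (β n) ≤ 2 * e n := hslope n
    have h2 : slopeG f (u n) (β n) < 1 := by
      have := he1 n; linarith [hslope0n n]
    rw [if_pos h2]
    apply ENNReal.ofReal_le_ofReal
    have h3 : slopeG f (u n) (β n) ≤ 1/2 := by have := he14 n; linarith
    have h4 : (1:ℝ)/2 ≤ Real.sqrt (1 - slopeG f (u n) (β n) ^ 2) := by
      rw [show (1:ℝ)/2 = Real.sqrt ((1/2)^2) from (Real.sqrt_sq (by norm_num)).symm]
      apply Real.sqrt_le_sqrt
      nlinarith [hslope0n n]
    calc slopeG f (u n) (β n) / Real.sqrt (1 - slopeG f (u n) (β n) ^ 2)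
        ≤ slopeG f (u n) (β n) / (1/2) := by
          apply div_le_div_of_nonneg_left (hslope0n n) (by norm_num) h4
      _ = 2 * slopeG f (u n) (β n) := by ring
      _ ≤ 4 * e n := by linarith
  have hwto0 : Tendsto (fun n => wslope f (u n)) atTop (nhds 0) := by
    have hub : Tendsto (fun n => ENNReal.ofReal (4 * e n)) atTop (nhds 0) := by
      rw [show (0:ℝ≥0∞) = ENNReal.ofReal 0 by simp]
      apply ENNReal.tendsto_ofReal
      have : Tendsto (fun n => 4 * e n) atTop (nhds (4 * 0)) := he_to0.const_mul 4
      simpa using this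
    exact tendsto_of_tendsto_of_tendsto_of_le_of_le tendsto_const_nhds hub
      (fun n => zero_le) hwn
  have hfto : Tendsto (fun n => f (u n)) atTop (nhds (c : EReal)) := by
    have : (fun n => f (u n)) = fun n => ((β n : ℝ) : EReal) := funext fun n => hfu n
    rw [this]
    exact EReal.tendsto_coe.mpr hβtoc
  obtain ⟨v, φ, hφ, hconv⟩ := hPS u (fun n => by rw [hfu n]; exact EReal.coe_ne_top _)
    hwto0 hfto
  -- facts along the subsequence
  have hβφ : Tendsto (fun n => β (φ n)) atTop (nhds c) := hβtoc.comp hφ.tendsto_atTop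
  have heφ : Tendsto (fun n => e (φ n)) atTop (nhds 0) := he_to0.comp hφ.tendsto_atTop
  have hdistto : Tendsto (fun n => distE (u (φ n), β (φ n)) (v, c)) atTop (nhds 0) := by
    apply squeeze_zero (fun n => Real.sqrt_nonneg _)
    · intro n
      exact distE_le_add_abs _ _
    · have h1 : Tendsto (fun n => dist (u (φ n)) v) atTop (nhds 0) :=
        tendsto_iff_dist_tendsto_zero.mp hconv
      have h2 : Tendsto (fun n => |β (φ n) - c|) atTop (nhds 0) := by
        have := tendsto_iff_dist_tendsto_zero.mp hβφ
        simpa [Real.dist_eq] using this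
      simpa using h1.add h2
  -- transfer argument
  have htransfer : ∀ σ : ℝ, σ ∈ slopeSet f v c → 0 < σ → False := by
    intro σ hσmem hσpos
    obtain ⟨δ, hδ, hnear⟩ := slopeSet_transfer hσmem
    have hev1 : ∀ᶠ n in atTop, distE (u (φ n), β (φ n)) (v, c) < δ :=
      (hdistto.eventually_lt_const hδ)
    have hev2 : ∀ᶠ n in atTop, 2 * e (φ n) < σ := by
      have h2e : Tendsto (fun n => 2 * e (φ n)) atTop (nhds 0) := by
        have := heφ.const_mul 2
        simpa using this
      exact h2e.eventually_lt_const hσpos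
    obtain ⟨n, h1, h2⟩ := (hev1.and hev2).exists
    have h3 : σ ∈ slopeSet f (u (φ n)) (β (φ n)) :=
      hnear (u (φ n)) (β (φ n)) (hepin (φ n)) h1
    have h4 : σ ≤ slopeG f (u (φ n)) (β (φ n)) :=
      le_csSup (slopeSet_bddAbove (hepin (φ n))) h3
    have h5 := hslope (φ n)
    linarith
  -- f v ≤ c
  have hfvle : f v ≤ (c : EReal) := by
    by_contra hgt
    push_neg at hgt
    obtain ⟨y, hy1, hy2⟩ := exists_between hgt
    have hev1 : ∀ᶠ x in nhds v, y < f x := hlsc v y hy2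
    have hev2 : ∀ᶠ n in atTop, y < f (u (φ n)) := hconv.eventually hev1
    have hfφ : Tendsto (fun n => f (u (φ n))) atTop (nhds (c:EReal)) :=
      hfto.comp hφ.tendsto_atTop
    have hev3 : ∀ᶠ n in atTop, f (u (φ n)) < y := hfφ.eventually_lt_const hy1
    obtain ⟨n, h1, h2⟩ := (hev2.and hev3).exists
    exact absurd (h1.trans h2) (lt_irrefl y)
  -- f v = c
  have hepivc : (v, c) ∈ epiSet f := hfvle
  have hfveq : f v = (c : EReal) := by
    rcases eq_or_lt_of_le hfvle with h | h
    · exact h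
    · exfalso
      have h1 := h33 v c hepivc h
      obtain ⟨σ, hσmem, hσgt⟩ := exists_gt_of_slopeG_pos (show (1:ℝ)/2 < slopeG f v c by
        rw [h1]; norm_num)
      exact htransfer σ hσmem (by linarith)
  -- slopeG f v c = 0
  have hslopev : slopeG f v c = 0 := by
    rcases lt_or_ge 0 (slopeG f v c) with h | h
    · exfalso
      obtain ⟨σ, hσmem, hσgt⟩ := exists_gt_of_slopeG_pos
        (show slopeG f v c / 2 < slopeG f v c by linarith)
      exact htransfer σ hσmem (by linarith)
    · exact le_antisymm h (slopeG_nonneg hepivc)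
  have htoRv : (f v).toReal = c := by rw [hfveq]; exact EReal.toReal_coe _
  refine ⟨v, ?_, ?_, ?_, hfveq⟩
  · intro hv0
    rw [hv0] at hfveq
    rw [hfveq] at hf0
    have : (η : EReal) ≤ (c : EReal) := EReal.coe_le_coe_iff.mpr hηc
    exact absurd (hf0.trans_le this) (lt_irrefl _)
  · rw [hfveq]; exact EReal.coe_ne_top _
  · rw [wslope, htoRv, hslopev]
    rw [if_pos (by norm_num : (0:ℝ) < 1)]
    simp
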